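/- Let G be a compact Lie group acting orthogonally on V with section Σ. Then the generalized Weyl group W(Σ) = N_G(Σ)/Z_G(Σ) is finite. -/

import Mathlib

open scoped Pointwise RealInnerProductSpace

/-- The set of vectors tangent at `x` to the orbit `G·x`: derivatives at `0` of curves
through `x` lying in the orbit. -/
def orbitTangent (G : Type*) [Group G] {V : Type*} [NormedAddCommGroup V]
    [InnerProductSpace ℝ V] [MulAction G V] (x : V) : Set V :=
  {v | ∃ c : ℝ → V, (∀ t, c t ∈ MulAction.orbit G x) ∧ c 0 = x ∧ HasDerivAt c v 0}

/-- A linear subspace `Σ ⊆ V` is a *section* for the action of `G` if it meets every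
orbit and at each of its points it is orthogonal to the orbit direction. -/
def IsSection (G : Type*) [Group G] {V : Type*} [NormedAddCommGroup V]
    [InnerProductSpace ℝ V] [MulAction G V] (Sig : Submodule ℝ V) : Prop :=
  (∀ v : V, ∃ s ∈ Sig, s ∈ MulAction.orbit G v) ∧
  (∀ x ∈ Sig, ∀ v ∈ orbitTangent G x, ∀ s ∈ Sig, ⟪v, s⟫ = 0)

set_option maxHeartbeats 1600000
set_option synthInstance.maxHeartbeats 400000

lemma aux_pow_bound {R : Type*} [NormedRing R] (A : R) :
    ∀ k : ℕ, ‖(1 + A) ^ k - 1 - k • A‖ ≤ (k : ℝ) ^ 2 * ‖A‖ ^ 2 * (1 + ‖A‖) ^ k := by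
  intro k
  induction k with
  | zero => simp
  | succ k ih =>
    have hA : (0:ℝ) ≤ ‖A‖ := norm_nonneg A
    have h1 : (1:ℝ) ≤ 1 + ‖A‖ := by linarith
    have hpow1 : (1:ℝ) ≤ (1 + ‖A‖) ^ (k+1) := one_le_pow₀ h1
    set E : R := (1 + A) ^ k - 1 - k • A with hE
    have key : (1 + A) ^ (k+1) - 1 - (k+1) • A = E + A * E + k • (A * A) := by
      rw [pow_succ']
      have h2 : (1 + A) ^ k = E + 1 + k • A := by rw [hE]; abel
      rw [h2, add_mul, one_mul, mul_add, mul_add, mul_one, mul_smul_comm, succ_nsmul]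
      abel
    rw [key]
    have hn1 : ‖E + A * E + k • (A * A)‖ ≤ ‖E‖ + ‖A‖ * ‖E‖ + k * (‖A‖ * ‖A‖) := by
      refine le_trans (norm_add_le _ _) ?_
      gcongr
      · exact le_trans (norm_add_le _ _) (by gcongr; exact norm_mul_le _ _)
      · exact le_trans norm_nsmul_le (by gcongr; exact norm_mul_le _ _)
    have hE0 : (0:ℝ) ≤ ‖E‖ := norm_nonneg E
    have hk : (0:ℝ) ≤ (k:ℝ) := Nat.cast_nonneg k
    have step1 : ‖E‖ + ‖A‖ * ‖E‖ + k * (‖A‖ * ‖A‖)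
        ≤ (1 + ‖A‖) * ((k : ℝ) ^ 2 * ‖A‖ ^ 2 * (1 + ‖A‖) ^ k) + (k:ℝ) * ‖A‖ ^ 2 := by
      nlinarith [ih, mul_le_mul_of_nonneg_left ih hA]
    have step2 : (1 + ‖A‖) * ((k : ℝ) ^ 2 * ‖A‖ ^ 2 * (1 + ‖A‖) ^ k) + (k:ℝ) * ‖A‖ ^ 2
        ≤ ((k:ℝ)+1) ^ 2 * ‖A‖ ^ 2 * (1 + ‖A‖) ^ (k+1) := by
      have e1 : (1 + ‖A‖) * ((k : ℝ) ^ 2 * ‖A‖ ^ 2 * (1 + ‖A‖) ^ k)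
          = (k : ℝ) ^ 2 * ‖A‖ ^ 2 * (1 + ‖A‖) ^ (k+1) := by ring
      rw [e1]
      nlinarith [sq_nonneg ‖A‖, mul_le_mul_of_nonneg_left hpow1 (mul_nonneg hk (sq_nonneg ‖A‖)),
        mul_nonneg (mul_nonneg (sq_nonneg ((k:ℝ))) (sq_nonneg ‖A‖)) (le_trans zero_le_one hpow1)]
    calc ‖E + A * E + k • (A * A)‖ ≤ _ := hn1
      _ ≤ _ := step1
      _ ≤ ((k:ℝ)+1) ^ 2 * ‖A‖ ^ 2 * (1 + ‖A‖) ^ (k+1) := step2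
      _ = ((k+1 : ℕ) : ℝ) ^ 2 * ‖A‖ ^ 2 * (1 + ‖A‖) ^ (k+1) := by push_cast; ring

lemma aux_small {R : Type*} [NormedRing R] (T : Set R) (hT : IsCompact T) (hinf : T.Infinite)
    (hmul : ∀ f ∈ T, ∀ g ∈ T, f * g ∈ T)
    (hinv : ∀ f ∈ T, ∃ f' ∈ T, f' * f = 1 ∧ f * f' = 1) :
    ∀ δ : ℝ, 0 < δ → ∃ w ∈ T, ∃ w' ∈ T, w' * w = 1 ∧ w * w' = 1 ∧ w ≠ 1 ∧ ‖w - 1‖ < δ := by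
  intro δ hδ
  have e := hinf.natEmbedding
  set x : ℕ → R := fun n => ((e n : ↥T) : R) with hx
  have hxT : ∀ n, x n ∈ T := fun n => (e n).2
  have hxinj : Function.Injective x := Subtype.coe_injective.comp e.injective
  obtain ⟨f, hfT, φ, hφ, hconv⟩ := hT.tendsto_subseq hxT
  obtain ⟨finv, hfinvT, hfi1, hfi2⟩ := hinv f hfT
  set y : ℕ → R := fun n => x (φ n) * finv with hy
  have hyT : ∀ n, y n ∈ T := fun n => hmul _ (hxT _) _ hfinvT
  have hyconv : Filter.Tendsto y Filter.atTop (nhds 1) := by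
    have := hconv.mul (tendsto_const_nhds (x := finv))
    rwa [hfi2] at this
  have hyone : ∀ n, y n = 1 → x (φ n) = f := by
    intro n h
    have : x (φ n) * (finv * f) = 1 * f := by
      rw [← mul_assoc]
      have h' : x (φ n) * finv = 1 := h
      rw [h']
    rwa [hfi1, mul_one, one_mul] at this
  have := Metric.tendsto_atTop.mp hyconv δ hδ
  obtain ⟨N, hN⟩ := this
  have hd : ∀ n, N ≤ n → ‖y n - 1‖ < δ := by
    intro n hn
    have := hN n hn
    rwa [dist_eq_norm] at this
  by_cases h1 : y N = 1
  · refine ⟨y (N+1), hyT _, ?_⟩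
    have hne : y (N+1) ≠ 1 := by
      intro h2
      have := hxinj ((hyone N h1).trans (hyone (N+1) h2).symm)
      exact absurd (hφ.injective this) (by omega)
    obtain ⟨yi, hyiT, hyi1, hyi2⟩ := hinv _ (hyT (N+1))
    exact ⟨yi, hyiT, hyi1, hyi2, hne, hd _ (by omega)⟩
  · obtain ⟨yi, hyiT, hyi1, hyi2⟩ := hinv _ (hyT N)
    exact ⟨y N, hyT _, yi, hyiT, hyi1, hyi2, h1, hd _ le_rfl⟩

lemma aux_key {R : Type*} [NormedRing R] [NormedAlgebra ℝ R] [FiniteDimensional ℝ R]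
    (T : Set R) (hT : IsCompact T) (hinf : T.Infinite)
    (hnorm : ∀ f ∈ T, ‖f‖ ≤ 1)
    (hpow : ∀ f ∈ T, ∀ k : ℕ, f ^ k ∈ T)
    (hmul : ∀ f ∈ T, ∀ g ∈ T, f * g ∈ T)
    (hinv : ∀ f ∈ T, ∃ f' ∈ T, f' * f = 1 ∧ f * f' = 1) :
    ∃ U : R, ‖U‖ = 1 ∧ ∀ t : ℝ, ∃ f ∈ T, ‖f - (1 + t • U)‖ ≤ t ^ 2 * Real.exp |t| := by
  classical
  -- sequences of small elements
  have hsmall := aux_small T hT hinf hmul hinv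
  have hc : ∀ n : ℕ, ∃ w ∈ T, ∃ w' ∈ T, w' * w = 1 ∧ w * w' = 1 ∧ w ≠ 1 ∧
      ‖w - 1‖ < 1 / (n + 1) := fun n => hsmall _ (by positivity)
  choose w hwT w' hw'T hww'1 hw'w1 hwne hwlt using hc
  set ε : ℕ → ℝ := fun n => ‖w n - 1‖ with hεdef
  have hεpos : ∀ n, 0 < ε n := by
    intro n
    rw [hεdef, norm_pos_iff, sub_ne_zero]
    exact hwne n
  have hεto : Filter.Tendsto ε Filter.atTop (nhds 0) := by
    refine squeeze_zero (fun n => (hεpos n).le) (fun n => (hwlt n).le) ?_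
    exact tendsto_one_div_add_atTop_nhds_zero_nat
  set u : ℕ → R := fun n => (ε n)⁻¹ • (w n - 1) with hudef
  have hunorm : ∀ n, ‖u n‖ = 1 := by
    intro n
    rw [hudef]
    simp only [norm_smul, norm_inv, Real.norm_eq_abs, abs_of_pos (hεpos n)]
    exact inv_mul_cancel₀ (hεpos n).ne'
  have husphere : ∀ n, u n ∈ Metric.sphere (0:R) 1 := by
    intro n; rw [mem_sphere_zero_iff_norm]; exact hunorm n
  obtain ⟨U, hUs, ψ, hψ, hUconv⟩ := (isCompact_sphere (0:R) 1).tendsto_subseq husphere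
  have hUnorm : ‖U‖ = 1 := mem_sphere_zero_iff_norm.mp hUs
  refine ⟨U, hUnorm, ?_⟩
  intro t
  -- subsequence data
  have hεψto : Filter.Tendsto (fun n => ε (ψ n)) Filter.atTop (nhds 0) :=
    hεto.comp hψ.tendsto_atTop
  have hduto : Filter.Tendsto (fun n => ‖u (ψ n) - U‖) Filter.atTop (nhds 0) := by
    have := hUconv
    rw [tendsto_iff_norm_sub_tendsto_zero] at this
    exact this
  -- the powers
  set k : ℕ → ℕ := fun n => ⌊|t| / ε (ψ n)⌋₊ with hkdef
  set b : ℕ → R := fun n => if 0 ≤ t then w (ψ n) else w' (ψ n) with hbdef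
  set z : ℕ → R := fun n => (b n) ^ (k n) with hzdef
  have hbT : ∀ n, b n ∈ T := by
    intro n; rw [hbdef]; dsimp only; split
    · exact hwT _
    · exact hw'T _
  have hzT : ∀ n, z n ∈ T := fun n => hpow _ (hbT n) _
  have hw'norm : ∀ n, ‖w' n - 1‖ ≤ ε n := by
    intro n
    have he : w' n - 1 = w' n * (1 - w n) := by
      rw [mul_sub, mul_one, hww'1]
    rw [he]
    calc ‖w' n * (1 - w n)‖ ≤ ‖w' n‖ * ‖1 - w n‖ := norm_mul_le _ _
      _ ≤ 1 * ‖1 - w n‖ := by gcongr; exact hnorm _ (hw'T n)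
      _ = ε n := by rw [one_mul, norm_sub_rev]
  have hbnorm : ∀ n, ‖b n - 1‖ ≤ ε (ψ n) := by
    intro n; rw [hbdef]; dsimp only; split
    · exact le_rfl
    · exact hw'norm _
  -- floor facts
  have hkε : ∀ n, (k n : ℝ) * ε (ψ n) ≤ |t| := by
    intro n
    rw [hkdef]
    have := Nat.floor_le (div_nonneg (abs_nonneg t) (hεpos (ψ n)).le)
    calc (⌊|t| / ε (ψ n)⌋₊ : ℝ) * ε (ψ n) ≤ (|t| / ε (ψ n)) * ε (ψ n) :=
          mul_le_mul_of_nonneg_right this (hεpos (ψ n)).le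
      _ = |t| := div_mul_cancel₀ _ (hεpos (ψ n)).ne'
  have hkε2 : ∀ n, |t| - ε (ψ n) ≤ (k n : ℝ) * ε (ψ n) := by
    intro n
    have h1 : |t| / ε (ψ n) < k n + 1 := Nat.lt_floor_add_one _
    have h2 : |t| < ((k n : ℝ) + 1) * ε (ψ n) := by
      rw [← div_lt_iff₀ (hεpos (ψ n))]; exact h1
    nlinarith [hεpos (ψ n)]
  -- main estimate
  have hmain : ∀ n, ‖z n - (1 + t • U)‖ ≤ t ^ 2 * Real.exp |t|
      + (ε (ψ n) + |t| * ε (ψ n) + |t| * ‖u (ψ n) - U‖) := by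
    intro n
    set εn := ε (ψ n) with hεn
    have hεnpos := hεpos (ψ n)
    have hbound1 : ‖z n - 1 - (k n) • (b n - 1)‖ ≤ t ^ 2 * Real.exp |t| := by
      have h0 := aux_pow_bound (b n - 1) (k n)
      rw [add_sub_cancel] at h0
      have h1 : (k n : ℝ) ^ 2 * ‖b n - 1‖ ^ 2 * (1 + ‖b n - 1‖) ^ (k n)
          ≤ (k n : ℝ) ^ 2 * εn ^ 2 * (1 + εn) ^ (k n) := by
        gcongr <;> first | exact norm_nonneg _ | exact hbnorm n
      have h2 : (k n : ℝ) ^ 2 * εn ^ 2 ≤ t ^ 2 := by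
        have := hkε n
        have h3 : ((k n : ℝ) * εn) ^ 2 ≤ |t| ^ 2 := by
          apply sq_le_sq'
          · nlinarith [mul_nonneg (Nat.cast_nonneg (k n)) hεnpos.le, abs_nonneg t]
          · exact this
        calc (k n : ℝ) ^ 2 * εn ^ 2 = ((k n : ℝ) * εn) ^ 2 := by ring
          _ ≤ |t| ^ 2 := h3
          _ = t ^ 2 := sq_abs t
      have h4 : (1 + εn) ^ (k n) ≤ Real.exp |t| := by
        calc (1 + εn) ^ (k n) ≤ (Real.exp εn) ^ (k n) := by
              apply pow_le_pow_left₀ (by positivity)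
              linarith [Real.add_one_le_exp εn]
          _ = Real.exp ((k n) * εn) := by rw [← Real.exp_nat_mul]
          _ ≤ Real.exp |t| := Real.exp_le_exp.mpr (hkε n)
      calc ‖z n - 1 - (k n) • (b n - 1)‖
          ≤ (k n : ℝ) ^ 2 * ‖b n - 1‖ ^ 2 * (1 + ‖b n - 1‖) ^ (k n) := h0
        _ ≤ (k n : ℝ) ^ 2 * εn ^ 2 * (1 + εn) ^ (k n) := h1
        _ ≤ t ^ 2 * Real.exp |t| := by
            calc (k n : ℝ) ^ 2 * εn ^ 2 * (1 + εn) ^ (k n)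
                ≤ t ^ 2 * (1 + εn) ^ (k n) := by
                  gcongr <;> first | positivity | exact h2
              _ ≤ t ^ 2 * Real.exp |t| := by gcongr <;> first | exact sq_nonneg t | exact h4
    have hwu : ∀ m, w m - 1 = (ε m) • u m := by
      intro m
      rw [hudef]
      dsimp only
      rw [smul_smul, mul_inv_cancel₀ (hεpos m).ne', one_smul]
    have hbound2 : ‖(k n) • (b n - 1) - t • U‖ ≤ εn + |t| * εn + |t| * ‖u (ψ n) - U‖ := by
      have hnsmul : ∀ (x : R), (k n) • x = ((k n : ℝ)) • x :=
        fun x => (Nat.cast_smul_eq_nsmul ℝ (k n) x).symm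
      have n1 : ∀ c : ℝ, ‖c • u (ψ n)‖ = |c| := fun c => by
        rw [norm_smul c, hunorm (ψ n), mul_one, Real.norm_eq_abs]
      have n2 : ∀ (c : ℝ) (x : R), ‖c • x‖ = |c| * ‖x‖ := fun c x => by
        rw [norm_smul c, Real.norm_eq_abs]
      by_cases ht : 0 ≤ t
      · have hb' : b n = w (ψ n) := by rw [hbdef]; simp [ht]
        have habs : |t| = t := abs_of_nonneg ht
        rw [hb', hnsmul, hwu (ψ n), smul_smul]
        calc ‖((k n : ℝ) * εn) • u (ψ n) - t • U‖
            = ‖(((k n : ℝ) * εn) - t) • u (ψ n) + t • (u (ψ n) - U)‖ := by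
              congr 1
              rw [sub_smul, smul_sub]
              abel
          _ ≤ ‖(((k n : ℝ) * εn) - t) • u (ψ n)‖ + ‖t • (u (ψ n) - U)‖ := norm_add_le _ _
          _ = |((k n : ℝ) * εn) - t| + |t| * ‖u (ψ n) - U‖ := by
              rw [n1, n2]
          _ ≤ εn + |t| * ‖u (ψ n) - U‖ := by
              have h5 : |((k n : ℝ) * εn) - t| ≤ εn := by
                rw [abs_le]
                constructor
                · have := hkε2 n; rw [habs] at this; linarith
                · have := hkε n; rw [habs] at this; linarith [hεnpos]
              linarith [h5]
          _ ≤ εn + |t| * εn + |t| * ‖u (ψ n) - U‖ := by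
              have : (0:ℝ) ≤ |t| * εn := mul_nonneg (abs_nonneg t) hεnpos.le
              linarith
      · have hb' : b n = w' (ψ n) := by rw [hbdef]; simp [ht]
        have habs : |t| = -t := abs_of_neg (lt_of_not_ge ht)
        rw [hb', hnsmul]
        have hsum : ‖(w' (ψ n) - 1) + (w (ψ n) - 1)‖ ≤ εn * εn := by
          have he : (w' (ψ n) - 1) + (w (ψ n) - 1) = (w' (ψ n) - 1) * (1 - w (ψ n)) := by
            rw [sub_mul, one_mul, mul_sub, mul_one, hww'1]
            abel
          rw [he]
          calc ‖(w' (ψ n) - 1) * (1 - w (ψ n))‖ ≤ ‖w' (ψ n) - 1‖ * ‖1 - w (ψ n)‖ :=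
                norm_mul_le _ _
            _ ≤ εn * εn := by
                gcongr
                · exact hw'norm _
                · rw [norm_sub_rev]
        calc ‖(k n : ℝ) • (w' (ψ n) - 1) - t • U‖
            = ‖((k n : ℝ) • ((w' (ψ n) - 1) + (w (ψ n) - 1)))
                + ((-((k n : ℝ) * εn)) • u (ψ n) - t • U)‖ := by
              congr 1
              rw [smul_add, hwu (ψ n), smul_smul, neg_smul]
              abel
          _ ≤ ‖(k n : ℝ) • ((w' (ψ n) - 1) + (w (ψ n) - 1))‖
                + ‖(-((k n : ℝ) * εn)) • u (ψ n) - t • U‖ := norm_add_le _ _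
          _ ≤ |t| * εn + (εn + |t| * ‖u (ψ n) - U‖) := by
              gcongr
              · calc ‖(k n : ℝ) • ((w' (ψ n) - 1) + (w (ψ n) - 1))‖
                    = (k n : ℝ) * ‖(w' (ψ n) - 1) + (w (ψ n) - 1)‖ := by
                      rw [norm_smul, Real.norm_eq_abs, abs_of_nonneg (Nat.cast_nonneg _)]
                  _ ≤ (k n : ℝ) * (εn * εn) := by
                      exact mul_le_mul_of_nonneg_left hsum (Nat.cast_nonneg _)
                  _ = ((k n : ℝ) * εn) * εn := by ring
                  _ ≤ |t| * εn := mul_le_mul_of_nonneg_right (hkε n) hεnpos.le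
              · calc ‖(-((k n : ℝ) * εn)) • u (ψ n) - t • U‖
                    = ‖(-((k n : ℝ) * εn) + |t|) • u (ψ n) + (-t) • (U - u (ψ n))‖ := by
                      rw [habs]; congr 1; module
                  _ ≤ ‖(-((k n : ℝ) * εn) + |t|) • u (ψ n)‖ + ‖(-t) • (U - u (ψ n))‖ :=
                      norm_add_le _ _
                  _ = |(-((k n : ℝ) * εn) + |t|)| + |t| * ‖U - u (ψ n)‖ := by
                      rw [n1, n2, abs_neg]
                  _ ≤ εn + |t| * ‖u (ψ n) - U‖ := by
                      rw [norm_sub_rev U]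
                      have h5 : |(-((k n : ℝ) * εn) + |t|)| ≤ εn := by
                        rw [abs_le]
                        constructor
                        · have := hkε n; linarith [hεnpos]
                        · have := hkε2 n; linarith
                      linarith [h5]
          _ = |t| * εn + εn + |t| * ‖u (ψ n) - U‖ := by ring
          _ = εn + |t| * εn + |t| * ‖u (ψ n) - U‖ := by ring
    calc ‖z n - (1 + t • U)‖
        = ‖(z n - 1 - (k n) • (b n - 1)) + ((k n) • (b n - 1) - t • U)‖ := by
          congr 1; abel
      _ ≤ ‖z n - 1 - (k n) • (b n - 1)‖ + ‖(k n) • (b n - 1) - t • U‖ := norm_add_le _ _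
      _ ≤ t ^ 2 * Real.exp |t| + (εn + |t| * εn + |t| * ‖u (ψ n) - U‖) := by
          gcongr
  -- extract limit
  obtain ⟨zlim, hzlimT, θ, hθ, hzconv⟩ := hT.tendsto_subseq hzT
  refine ⟨zlim, hzlimT, ?_⟩
  have hδto : Filter.Tendsto
      (fun n => t ^ 2 * Real.exp |t| + (ε (ψ n) + |t| * ε (ψ n) + |t| * ‖u (ψ n) - U‖))
      Filter.atTop (nhds (t ^ 2 * Real.exp |t|)) := by
    have h0 : Filter.Tendsto (fun n => ε (ψ n) + |t| * ε (ψ n) + |t| * ‖u (ψ n) - U‖)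
        Filter.atTop (nhds 0) := by
      have := (hεψto.add ((hεψto.const_mul |t|))).add (hduto.const_mul |t|)
      simpa using this
    have := (tendsto_const_nhds (x := t ^ 2 * Real.exp |t|) (f := Filter.atTop (α := ℕ))).add h0
    simpa using this
  have hnconv : Filter.Tendsto (fun j => ‖z (θ j) - (1 + t • U)‖) Filter.atTop
      (nhds ‖zlim - (1 + t • U)‖) := by
    have : Filter.Tendsto (fun j => z (θ j)) Filter.atTop (nhds zlim) := hzconv
    exact ((this.sub tendsto_const_nhds).norm)
  exact le_of_tendsto_of_tendsto' hnconv (hδto.comp hθ.tendsto_atTop)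
    (fun j => hmain (θ j))

/-- The generalized Weyl group `W(Σ) = N_G(Σ)/Z_G(Σ)` of a section of an
orthogonal representation of a compact Lie group is finite. -/
theorem weylGroup_finite
    {G V : Type*} [Group G] [TopologicalSpace G] [IsTopologicalGroup G] [CompactSpace G]
    [NormedAddCommGroup V] [InnerProductSpace ℝ V] [FiniteDimensional ℝ V]
    [MulAction G V] [ContinuousSMul G V]
    (hlin : ∀ g : G, IsLinearMap ℝ (fun v : V => g • v))
    (hiso : ∀ (g : G) (v : V), ‖g • v‖ = ‖v‖)
    (Sig : Submodule ℝ V) (hSig : IsSection G Sig) :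
    Finite (MulAction.stabilizer G (Sig : Set V) ⧸
      (fixingSubgroup G (Sig : Set V)).subgroupOf (MulAction.stabilizer G (Sig : Set V))) := by
  classical
  set S : Set V := (Sig : Set V) with hS
  set N : Subgroup G := MulAction.stabilizer G S with hNdef
  -- membership transfer
  have hmem : ∀ g : G, g ∈ N → ∀ v : V, v ∈ Sig → g • v ∈ Sig := by
    intro g hg v hv
    have h1 : g • S = S := MulAction.mem_stabilizer_iff.mp hg
    have : g • v ∈ g • S := Set.smul_mem_smul_set hv
    rwa [h1] at this
  -- the restriction map
  let Φ : ↥N → (Sig →L[ℝ] Sig) := fun g =>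
    LinearMap.toContinuousLinearMap
      ((IsLinearMap.mk' _ (hlin (g : G))).restrict
        (fun x hx => hmem (g : G) g.2 x hx))
  have hΦapply : ∀ (g : ↥N) (v : Sig), ((Φ g v : Sig) : V) = (g : G) • (v : V) :=
    fun g v => rfl
  have hΦone : Φ 1 = 1 := by
    ext v
    rw [hΦapply]
    simp [one_smul]
  have hΦmul : ∀ a b : ↥N, Φ (a * b) = Φ a * Φ b := by
    intro a b
    ext v
    rw [hΦapply]
    have : (Φ a * Φ b) v = Φ a (Φ b v) := rfl
    rw [this, hΦapply, hΦapply]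
    simp [mul_smul]
  set T : Set (Sig →L[ℝ] Sig) := Set.range Φ with hTdef
  have h1T : (1 : Sig →L[ℝ] Sig) ∈ T := ⟨1, hΦone⟩
  have hmulT : ∀ f ∈ T, ∀ g ∈ T, f * g ∈ T := by
    rintro f ⟨a, rfl⟩ g ⟨b, rfl⟩
    exact ⟨a * b, hΦmul a b⟩
  have hpowT : ∀ f ∈ T, ∀ k : ℕ, f ^ k ∈ T := by
    rintro f ⟨a, rfl⟩ k
    induction k with
    | zero => simpa using h1T
    | succ k ih =>
      obtain ⟨c, hc⟩ := ih
      exact ⟨c * a, by rw [hΦmul, hc, pow_succ]⟩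
  have hinvT : ∀ f ∈ T, ∃ f' ∈ T, f' * f = 1 ∧ f * f' = 1 := by
    rintro f ⟨a, rfl⟩
    refine ⟨Φ a⁻¹, ⟨a⁻¹, rfl⟩, ?_, ?_⟩
    · rw [← hΦmul, inv_mul_cancel, hΦone]
    · rw [← hΦmul, mul_inv_cancel, hΦone]
  have hnormT : ∀ f ∈ T, ‖f‖ ≤ 1 := by
    rintro f ⟨a, rfl⟩
    refine ContinuousLinearMap.opNorm_le_bound _ zero_le_one ?_
    intro v
    rw [one_mul]
    have h1 : ‖Φ a v‖ = ‖((Φ a v : Sig) : V)‖ := rfl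
    have h2 : ‖v‖ = ‖(v : V)‖ := rfl
    rw [h1, h2, hΦapply, hiso]
  -- closedness and compactness of N
  have hSclosed : IsClosed S := Sig.closed_of_finiteDimensional
  have hNclosed : IsClosed (N : Set G) := by
    have heq : (N : Set G) =
        {g : G | ∀ v ∈ S, g • v ∈ S} ∩ {g : G | ∀ v ∈ S, g⁻¹ • v ∈ S} := by
      ext g
      constructor
      · intro hg
        have h1 : g • S = S := MulAction.mem_stabilizer_iff.mp hg
        constructor
        · intro v hv
          have : g • v ∈ g • S := Set.smul_mem_smul_set hv
          rwa [h1] at this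
        · intro v hv
          rw [← h1] at hv
          obtain ⟨x, hx, rfl⟩ := hv
          rwa [inv_smul_smul]
      · rintro ⟨h1, h2⟩
        show g • S = S
        apply Set.Subset.antisymm
        · rintro _ ⟨x, hx, rfl⟩
          exact h1 x hx
        · intro v hv
          exact ⟨g⁻¹ • v, h2 v hv, smul_inv_smul g v⟩
    rw [heq]
    apply IsClosed.inter
    · have h2 : {g : G | ∀ v ∈ S, g • v ∈ S} = ⋂ v ∈ S, (fun g : G => g • v) ⁻¹' S := by
        ext g; simp
      rw [h2]
      exact isClosed_biInter fun v _ =>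
        IsClosed.preimage (continuous_id.smul continuous_const) hSclosed
    · have h2 : {g : G | ∀ v ∈ S, g⁻¹ • v ∈ S} = ⋂ v ∈ S, (fun g : G => g⁻¹ • v) ⁻¹' S := by
        ext g; simp
      rw [h2]
      exact isClosed_biInter fun v _ =>
        IsClosed.preimage (continuous_inv.smul continuous_const) hSclosed
  haveI : CompactSpace ↥N := isCompact_iff_compactSpace.mp hNclosed.isCompact
  -- continuity of Φ
  have hΦcont : Continuous Φ := by
    let n := Module.finrank ℝ Sig
    let bb : Module.Basis (Fin n) ℝ Sig := Module.finBasis ℝ Sig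
    let Ev : (Sig →L[ℝ] Sig) →ₗ[ℝ] (Fin n → Sig) :=
      LinearMap.pi (fun i => (ContinuousLinearMap.apply ℝ Sig (bb i)).toLinearMap)
    have hker : LinearMap.ker Ev = ⊥ := by
      rw [LinearMap.ker_eq_bot']
      intro f hf
      have hf' : ∀ i, f (bb i) = 0 := fun i => congrFun hf i
      apply ContinuousLinearMap.coe_injective
      have : (f : Sig →ₗ[ℝ] Sig) = 0 := by
        apply Module.Basis.ext bb
        intro i
        simpa using hf' i
      simpa using this
    have hemb := LinearMap.isClosedEmbedding_of_injective hker
    rw [hemb.toIsEmbedding.continuous_iff]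
    refine continuous_pi (fun i => ?_)
    show Continuous fun g : ↥N => Φ g (bb i)
    refine Continuous.subtype_mk ?_ _
    show Continuous fun g : ↥N => ((g : G) • ((bb i : Sig) : V))
    exact (continuous_subtype_val.smul continuous_const)
  have hTcompact : IsCompact T := isCompact_range hΦcont
  -- T is finite
  have hTfin : T.Finite := by
    by_contra hinf
    have hinf' : T.Infinite := hinf
    obtain ⟨U, hUnorm, hU⟩ := aux_key T hTcompact hinf' hnormT hpowT hmulT hinvT
    choose f hfT hfb using hU
    have hf0 : f 0 = 1 := by
      have h0 := hfb 0
      have h1 : ‖f 0 - 1‖ ≤ 0 := by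
        rw [Algebra.smul_def, map_zero, zero_mul, add_zero] at h0
        simpa using h0
      have h2 : f 0 - 1 = 0 := (norm_le_zero_iff (a := f 0 - 1)).mp h1
      rwa [sub_eq_zero] at h2
    choose gg hgg using fun t => hfT t
    have hUx : ∀ y : Sig, ((U y : Sig) : V) = 0 := by
      intro y
      set x : V := (y : V) with hxdef
      have hx : x ∈ Sig := y.2
      have hy : (⟨x, hx⟩ : Sig) = y := rfl
      set c : ℝ → V := fun t => ((f t ⟨x, hx⟩ : Sig) : V) with hcdef
      set v : V := ((U ⟨x, hx⟩ : Sig) : V) with hvdef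
      have hvmem : v ∈ Sig := (U ⟨x, hx⟩).2
      have horb : ∀ t, c t ∈ MulAction.orbit G x := by
        intro t
        have h1 : c t = (gg t : G) • x := by
          rw [hcdef]
          dsimp only
          rw [← hgg t]
          exact hΦapply (gg t) ⟨x, hx⟩
        rw [h1]
        exact MulAction.mem_orbit x _
      have hc0 : c 0 = x := by
        rw [hcdef]
        dsimp only
        rw [hf0]
        rfl
      have hb : ∀ t : ℝ, ‖c t - x - t • v‖ ≤ (t ^ 2 * Real.exp |t|) * ‖x‖ := by
        intro t
        have e1 : c t - x - t • v = (((f t - (1 + t • U)) ⟨x, hx⟩ : Sig) : V) := by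
          rw [hcdef, hvdef]
          simp only [ContinuousLinearMap.sub_apply, ContinuousLinearMap.add_apply,
            ContinuousLinearMap.one_apply, ContinuousLinearMap.smul_apply,
            Submodule.coe_sub, Submodule.coe_add, Submodule.coe_smul, SetLike.val_smul]
          abel
        rw [e1]
        have e2 : ‖(((f t - (1 + t • U)) ⟨x, hx⟩ : Sig) : V)‖
            = ‖(f t - (1 + t • U)) ⟨x, hx⟩‖ := rfl
        rw [e2]
        calc ‖(f t - (1 + t • U)) ⟨x, hx⟩‖
            ≤ ‖f t - (1 + t • U)‖ * ‖(⟨x, hx⟩ : Sig)‖ :=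
              ContinuousLinearMap.le_opNorm _ _
          _ ≤ (t ^ 2 * Real.exp |t|) * ‖x‖ := by
              have e3 : ‖(⟨x, hx⟩ : Sig)‖ = ‖x‖ := rfl
              rw [e3]
              exact mul_le_mul_of_nonneg_right (hfb t) (norm_nonneg x)
      have hderiv : HasDerivAt c v 0 := by
        rw [hasDerivAt_iff_isLittleO, Asymptotics.isLittleO_iff]
        intro C hC
        rw [Metric.eventually_nhds_iff]
        refine ⟨min 1 (C / (3 * ‖x‖ + 1)), by positivity, ?_⟩
        intro t ht
        rw [Real.dist_eq, sub_zero] at ht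
        have ht1 : |t| ≤ 1 := le_trans ht.le (min_le_left _ _)
        have ht2 : |t| ≤ C / (3 * ‖x‖ + 1) := le_trans ht.le (min_le_right _ _)
        have hexp : Real.exp |t| ≤ 3 := by
          have := Real.exp_one_lt_d9
          calc Real.exp |t| ≤ Real.exp 1 := Real.exp_le_exp.mpr ht1
            _ ≤ 3 := by linarith
        rw [hc0, sub_zero, Real.norm_eq_abs]
        calc ‖c t - x - t • v‖ ≤ (t ^ 2 * Real.exp |t|) * ‖x‖ := hb t
          _ = |t| * (|t| * Real.exp |t| * ‖x‖) := by
              rw [← sq_abs]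
              ring
          _ ≤ |t| * C := by
              apply mul_le_mul_of_nonneg_left _ (abs_nonneg t)
              have hx1 : (0:ℝ) ≤ ‖x‖ := norm_nonneg x
              have h3 : |t| * (3 * ‖x‖ + 1) ≤ C := by
                rw [← le_div_iff₀ (by positivity)]
                exact ht2
              nlinarith [abs_nonneg t, Real.exp_pos |t|]
          _ = C * |t| := mul_comm _ _
      have hvt : v ∈ orbitTangent G x := ⟨c, horb, hc0, hderiv⟩
      have hperp := hSig.2 x hx v hvt v hvmem
      have hv0 : v = 0 := by
        have := real_inner_self_eq_norm_sq v
        rw [hperp] at this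
        have : ‖v‖ = 0 := by nlinarith [norm_nonneg v]
        rwa [norm_eq_zero] at this
      exact hv0
    have hU0 : U = 0 := by
      ext y
      have := hUx y
      simpa using this
    rw [hU0, ContinuousLinearMap.opNorm_zero] at hUnorm
    exact zero_ne_one hUnorm
  -- finiteness of the quotient
  haveI : Finite ↥T := hTfin.to_subtype
  set K : Subgroup ↥N := (fixingSubgroup G S).subgroupOf N with hKdef
  have hker1 : ∀ c : ↥N, Φ c = 1 ↔ (c : G) ∈ fixingSubgroup G S := by
    intro c
    constructor
    · intro hc
      rw [mem_fixingSubgroup_iff]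
      intro y hy
      have h1 := congrArg (fun ff : Sig →L[ℝ] Sig => ((ff ⟨y, hy⟩ : Sig) : V)) hc
      rw [hΦapply] at h1
      simpa using h1
    · intro hc
      ext y
      rw [hΦapply]
      have := (mem_fixingSubgroup_iff G).mp hc (y : V) y.2
      simpa using this
  have key : ∀ a b : ↥N, Φ a = Φ b ↔ a⁻¹ * b ∈ K := by
    intro a b
    rw [hKdef, Subgroup.mem_subgroupOf, ← hker1]
    constructor
    · intro h
      rw [hΦmul, ← h, ← hΦmul, inv_mul_cancel, hΦone]
    · intro h
      have h2 : Φ (a * (a⁻¹ * b)) = Φ a * 1 := by rw [hΦmul, h]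
      rw [mul_one, ← mul_assoc, mul_inv_cancel, one_mul] at h2
      exact h2.symm
  refine Finite.of_injective
    (Quotient.lift (fun g : ↥N => (⟨Φ g, ⟨g, rfl⟩⟩ : ↥T)) ?_) ?_
  · intro a b hab
    have hab' : a⁻¹ * b ∈ K := QuotientGroup.leftRel_apply.mp hab
    exact Subtype.ext ((key a b).mpr hab')
  · intro q1 q2
    refine Quotient.inductionOn₂ q1 q2 ?_
    intro a b h
    have h2 : Φ a = Φ b := congrArg Subtype.val h
    exact Quotient.sound (QuotientGroup.leftRel_apply.mpr ((key a b).mp h2))
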